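/- Let q : (0,∞) → ℝ be C¹ and positive with q' > 0 on (0,∞), such that the limit L := lim_{r→0⁺} r·q'(r)/q(r) exists and is positive, and suppose Q(r) = ∫₀ʳ q(t) dt is finite for all r. Then lim_{r→0⁺} (Q/q)'(r) exists and equals 1/(L + 1). -/

import Mathlib

open Set Filter MeasureTheory

theorem stmt3 (q q' : ℝ → ℝ) (L : ℝ) (hL : 0 < L)
    (hderiv : ∀ r > 0, HasDerivAt q (q' r) r)
    (hcont : ContinuousOn q' (Ioi 0))
    (hqpos : ∀ r > 0, 0 < q r) (hq'pos : ∀ r > 0, 0 < q' r)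
    (hlim : Tendsto (fun r => r * q' r / q r) (nhdsWithin 0 (Ioi 0)) (nhds L))
    (hint : ∀ r > 0, IntervalIntegrable q volume 0 r) :
    Tendsto (fun r => 1 - (∫ t in (0:ℝ)..r, q t) * q' r / (q r) ^ 2)
      (nhdsWithin 0 (Ioi 0)) (nhds (1 / (L + 1))) := by
  set Q : ℝ → ℝ := fun r => ∫ t in (0:ℝ)..r, q t with hQ
  -- q is continuous on Ioi 0
  have hqcont : ∀ r > 0, ContinuousAt q r := fun r hr =>
    (hderiv r hr).differentiableAt.continuousAt
  -- q is monotone on Ioi 0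
  have hmono : StrictMonoOn q (Ioi 0) := by
    apply strictMonoOn_of_hasDerivWithinAt_pos (convex_Ioi 0)
      (fun r hr => (hqcont r hr).continuousWithinAt)
    · intro r hr
      rw [interior_Ioi] at hr
      exact (hderiv r hr).hasDerivWithinAt
    · intro r hr
      rw [interior_Ioi] at hr
      exact hq'pos r hr
  -- Q tendsto 0
  have hQbound : ∀ r ∈ Ioo (0:ℝ) 1, 0 ≤ Q r ∧ Q r ≤ r * q 1 := by
    intro r hr
    have hae : ∀ᵐ t ∂(volume.restrict (Icc (0:ℝ) r)), t ∈ Ioc (0:ℝ) r := by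
      rw [ae_restrict_iff' measurableSet_Icc]
      have h0 : ∀ᵐ t : ℝ ∂volume, t ≠ 0 := by
        rw [ae_iff]
        have : {a : ℝ | ¬a ≠ 0} = {0} := by ext a; simp
        rw [this, Real.volume_singleton]
      filter_upwards [h0] with t ht htIcc
      exact ⟨lt_of_le_of_ne htIcc.1 (Ne.symm ht), htIcc.2⟩
    constructor
    · have h0 : (fun _ : ℝ => (0:ℝ)) ≤ᵐ[volume.restrict (Icc (0:ℝ) r)] q := by
        filter_upwards [hae] with t ht
        exact (hqpos t ht.1).le
      simpa using intervalIntegral.integral_mono_ae_restrict hr.1.le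
        intervalIntegrable_const (hint r hr.1) h0
    · have h1 : q ≤ᵐ[volume.restrict (Icc (0:ℝ) r)] (fun _ : ℝ => q 1) := by
        filter_upwards [hae] with t ht
        exact (hmono.monotoneOn ht.1 (by norm_num) (ht.2.trans hr.2.le)).trans le_rfl
      simpa using intervalIntegral.integral_mono_ae_restrict hr.1.le
        (hint r hr.1) intervalIntegrable_const h1
  have hQ0 : Tendsto Q (nhdsWithin 0 (Ioi 0)) (nhds 0) := by
    have : Tendsto (fun r : ℝ => r * q 1) (nhdsWithin 0 (Ioi 0)) (nhds 0) := by
      have := (tendsto_id.mul tendsto_const_nhds :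
        Tendsto (fun r : ℝ => r * q 1) (nhds 0) (nhds (0 * q 1)))
      rw [zero_mul] at this
      exact this.mono_left nhdsWithin_le_nhds
    apply squeeze_zero' ?_ ?_ this
    · filter_upwards [Ioo_mem_nhdsGT_of_mem (by norm_num : (0:ℝ) ∈ Ico (0:ℝ) 1)] with r hr
      exact (hQbound r hr).1
    · filter_upwards [Ioo_mem_nhdsGT_of_mem (by norm_num : (0:ℝ) ∈ Ico (0:ℝ) 1)] with r hr
      exact (hQbound r hr).2
  -- g = r * q r tendsto 0
  have hg0 : Tendsto (fun r => r * q r) (nhdsWithin 0 (Ioi 0)) (nhds 0) := by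
    have h1 : Tendsto (fun r : ℝ => r * q 1) (nhdsWithin 0 (Ioi 0)) (nhds 0) := by
      have := (tendsto_id.mul tendsto_const_nhds :
        Tendsto (fun r : ℝ => r * q 1) (nhds 0) (nhds (0 * q 1)))
      rw [zero_mul] at this
      exact this.mono_left nhdsWithin_le_nhds
    apply squeeze_zero' ?_ ?_ h1
    · filter_upwards [Ioo_mem_nhdsGT_of_mem (by norm_num : (0:ℝ) ∈ Ico (0:ℝ) 1)] with r hr
      exact mul_nonneg hr.1.le (hqpos r hr.1).le
    · filter_upwards [Ioo_mem_nhdsGT_of_mem (by norm_num : (0:ℝ) ∈ Ico (0:ℝ) 1)] with r hr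
      exact mul_le_mul_of_nonneg_left
        ((hmono.monotoneOn hr.1 (by norm_num) hr.2.le)) hr.1.le
  -- L'Hopital: Q r / (r * q r) → 1/(L+1)
  have hlhop : Tendsto (fun r => Q r / (r * q r)) (nhdsWithin 0 (Ioi 0)) (nhds (1 / (L + 1))) := by
    apply HasDerivAt.lhopital_zero_right_on_Ioo (a := 0) (b := 1) (f' := q)
      (g' := fun r => q r + r * q' r) one_pos
    · intro x hx
      exact intervalIntegral.integral_hasDerivAt_right (hint x hx.1)
        ((ContinuousOn.stronglyMeasurableAtFilter isOpen_Ioi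
          (fun r hr => (hqcont r hr).continuousWithinAt) x hx.1))
        (hqcont x hx.1)
    · intro x hx
      have : HasDerivAt (fun y => y * q y) (1 * q x + x * q' x) x :=
        (hasDerivAt_id' x).mul (hderiv x hx.1)
      simpa using this
    · intro x hx
      have := add_pos (hqpos x hx.1) (mul_pos hx.1 (hq'pos x hx.1))
      exact this.ne'
    · exact hQ0
    · exact hg0
    · -- q x / (q x + x * q' x) → 1/(L+1)
      have hcomp : Tendsto (fun r => 1 / (1 + r * q' r / q r)) (nhdsWithin 0 (Ioi 0))
          (nhds (1 / (1 + L))) := by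
        have h1 : Tendsto (fun r => 1 + r * q' r / q r) (nhdsWithin 0 (Ioi 0))
            (nhds (1 + L)) := tendsto_const_nhds.add hlim
        exact (tendsto_const_nhds.div h1 (by linarith)).comp tendsto_id |>.congr (fun x => rfl)
      rw [show (1:ℝ)/(L+1) = 1/(1+L) by ring]
      apply hcomp.congr'
      filter_upwards [self_mem_nhdsWithin] with r hr
      have hq := (hqpos r hr).ne'
      field_simp
  -- combine
  have hmain : Tendsto (fun r => Q r * q' r / (q r) ^ 2) (nhdsWithin 0 (Ioi 0))
      (nhds (L / (L + 1))) := by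
    have := hlhop.mul hlim
    rw [show 1 / (L + 1) * L = L / (L + 1) by ring] at this
    apply this.congr'
    filter_upwards [self_mem_nhdsWithin] with r hr
    have hq := (hqpos r hr).ne'
    have hr0 : (r:ℝ) ≠ 0 := ne_of_gt hr
    field_simp
  have := Tendsto.sub (tendsto_const_nhds (x := (1:ℝ))) hmain
  rw [show 1 - L / (L + 1) = 1 / (L + 1) by field_simp; ring] at this
  exact this
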